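/- For every real number s with 0 < s < 2 there exists a positive integer r_s such that for every integer r ≥ r_s the finite sum S_r(s) is strictly negative. -/

import Mathlib

open Filter Finset



noncomputable def Fz (s x : ℝ) : ℝ := x ^ (-s) * (-1 + s * Real.log x)

lemma Fz_hasDeriv (s : ℝ) {x : ℝ} (hx : 0 < x) :
    HasDerivAt (Fz s) (s * x ^ (-s - 1) * (2 - s * Real.log x)) x := by
  have h1 : HasDerivAt (fun t : ℝ => t ^ (-s)) (-s * x ^ (-s - 1)) x := by
    simpa using Real.hasDerivAt_rpow_const (p := -s) (Or.inl hx.ne')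
  have h2 : HasDerivAt (fun t : ℝ => -1 + s * Real.log t) (s * x⁻¹) x :=
    ((Real.hasDerivAt_log hx.ne').const_mul s).const_add (-1)
  have h := h1.mul h2
  have hxx : x ^ (-s) * x⁻¹ = x ^ (-s - 1) := by
    rw [← Real.rpow_neg_one x, ← Real.rpow_add hx]; ring_nf
  refine h.congr_deriv ?_
  have h3 : x ^ (-s) * (s * x⁻¹) = s * x ^ (-s - 1) := by
    rw [show x ^ (-s) * (s * x⁻¹) = s * (x ^ (-s) * x⁻¹) by ring, hxx]
  rw [show -s * x ^ (-s-1) * (-1 + s * Real.log x) + x ^ (-s) * (s * x⁻¹)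
      = x ^ (-s) * (s * x⁻¹) + (- x ^ (-s-1)) * (s * (-1 + s * Real.log x)) by ring, h3]
  ring

lemma Fz_slope (s : ℝ) (hs : 0 < s) {x y B : ℝ} (hx : Real.exp (3 / s) ≤ x)
    (hxy : x ≤ y) (hyB : y ≤ B) :
    Fz s y - Fz s x ≤ -(s * B ^ (-s - 1)) * (y - x) := by
  have ha : (0:ℝ) < Real.exp (3 / s) := Real.exp_pos _
  have hD : Convex ℝ (Set.Icc (Real.exp (3/s)) B) := convex_Icc _ _
  have hxB : Real.exp (3/s) ≤ B := le_trans hx (le_trans hxy hyB)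
  refine hD.image_sub_le_mul_sub_of_deriv_le ?_ ?_ ?_ x ⟨hx, le_trans hxy hyB⟩ y
    ⟨le_trans hx hxy, hyB⟩ hxy
  · intro t ht
    exact ((Fz_hasDeriv s (lt_of_lt_of_le ha ht.1)).continuousAt).continuousWithinAt
  · rw [interior_Icc]
    intro t ht
    exact ((Fz_hasDeriv s (lt_of_lt_of_le ha ht.1.le)).differentiableAt).differentiableWithinAt
  · rw [interior_Icc]
    intro t ht
    have ht0 : 0 < t := lt_of_lt_of_le ha ht.1.le
    rw [(Fz_hasDeriv s ht0).deriv]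
    have hlog : 3 / s ≤ Real.log t := by
      calc 3 / s = Real.log (Real.exp (3/s)) := (Real.log_exp _).symm
      _ ≤ Real.log t := Real.log_le_log ha ht.1.le
    have h3 : 3 ≤ s * Real.log t := by
      rw [div_le_iff₀ hs] at hlog; linarith
    have hB : B ^ (-s-1) ≤ t ^ (-s-1) :=
      Real.rpow_le_rpow_of_nonpos ht0 ht.2.le (by linarith)
    have hu : 0 < t ^ (-s-1) := Real.rpow_pos_of_pos ht0 _
    have e1 := mul_le_mul_of_nonneg_left (show 2 - s * Real.log t ≤ -1 by linarith)
      (mul_pos hs hu).le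
    have e2 := mul_le_mul_of_nonneg_left hB hs.le
    nlinarith

lemma Fz_le_one (s : ℝ) (hs : 0 < s) {x : ℝ} (hx : 1 ≤ x) : Fz s x ≤ 1 := by
  have hx0 : (0:ℝ) < x := lt_of_lt_of_le one_pos hx
  have hBv : (0:ℝ) < x ^ s := Real.rpow_pos_of_pos hx0 s
  have hA : (0:ℝ) < x ^ (-s) := Real.rpow_pos_of_pos hx0 _
  have hAB : x ^ (-s) * x ^ s = 1 := by
    rw [← Real.rpow_add hx0]; norm_num
  have hlog : s * Real.log x ≤ x ^ s := by
    rw [← Real.log_rpow hx0]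
    linarith [Real.log_le_sub_one_of_pos hBv]
  have := mul_le_mul_of_nonneg_left (show -1 + s * Real.log x ≤ x ^ s by linarith) hA.le
  unfold Fz; linarith [hAB ▸ this]

lemma Fz_ge (s : ℝ) (hs : 0 < s) {x : ℝ} (hx : 1 ≤ x) : -1 ≤ Fz s x := by
  have hx0 : (0:ℝ) < x := lt_of_lt_of_le one_pos hx
  have hA : (0:ℝ) < x ^ (-s) := Real.rpow_pos_of_pos hx0 _
  have hA1 : x ^ (-s) ≤ 1 := Real.rpow_le_one_of_one_le_of_nonpos hx (by linarith)
  have hlog : 0 ≤ Real.log x := Real.log_nonneg hx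
  unfold Fz
  rcases le_or_gt 0 (-1 + s * Real.log x) with h | h
  · nlinarith
  · nlinarith

lemma term_le_neg (s : ℝ) (hs : 0 < s) (r p N : ℕ)
    (hN : Real.exp (3 / s) ≤ (N : ℝ)) (hp1 : r + 1 ≤ p) (hp2 : p + N ≤ 2 * r + 1) :
    ((p : ℝ) * (2 * (r : ℝ) + 1 - (p : ℝ)) / (2 * (p : ℝ) - 2 * (r : ℝ) - 1)) *
      (Fz s (p : ℝ) - Fz s (2 * (r : ℝ) + 1 - (p : ℝ)))
      ≤ -(s * (2 * (r : ℝ) + 1) ^ (-s - 1)) * ((p : ℝ) * (2 * (r : ℝ) + 1 - (p : ℝ))) := by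
  have hP : (r : ℝ) + 1 ≤ (p : ℝ) := by exact_mod_cast hp1
  have hQN : (N : ℝ) ≤ 2 * (r : ℝ) + 1 - (p : ℝ) := by
    have : (p : ℝ) + (N : ℝ) ≤ 2 * (r : ℝ) + 1 := by exact_mod_cast hp2
    linarith
  set P : ℝ := (p : ℝ)
  set Q : ℝ := 2 * (r : ℝ) + 1 - P with hQdef
  have hd : (1 : ℝ) ≤ 2 * P - 2 * (r : ℝ) - 1 := by
    have : 2 * ((r : ℝ) + 1) ≤ 2 * P := by linarith
    linarith
  have hd0 : (0 : ℝ) < 2 * P - 2 * (r : ℝ) - 1 := by linarith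
  have hQx : Real.exp (3 / s) ≤ Q := le_trans hN hQN
  have hQ0 : 0 < Q := lt_of_lt_of_le (Real.exp_pos _) hQx
  have hQP : Q ≤ P := by simp only [hQdef]; linarith
  have hPB : P ≤ 2 * (r : ℝ) + 1 := by simp only [hQdef] at hQ0; linarith
  have hslope := Fz_slope s hs hQx hQP hPB
  have hw : 0 ≤ P * Q / (2 * P - 2 * (r : ℝ) - 1) := by
    apply div_nonneg _ hd0.le
    have hP0 : 0 < P := lt_of_lt_of_le hQ0 hQP
    positivity
  have h1 := mul_le_mul_of_nonneg_left hslope hw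
  have h2 : P * Q / (2 * P - 2 * (r : ℝ) - 1) *
      (-(s * (2 * (r : ℝ) + 1) ^ (-s - 1)) * (P - Q)) =
      -(s * (2 * (r : ℝ) + 1) ^ (-s - 1)) * (P * Q) := by
    have hPQ : P - Q = 2 * P - 2 * (r : ℝ) - 1 := by simp only [hQdef]; ring
    rw [hPQ]
    rw [mul_comm (-(s * (2 * (r : ℝ) + 1) ^ (-s - 1))) (2 * P - 2 * (r : ℝ) - 1), ← mul_assoc,
      div_mul_cancel₀ _ hd0.ne']
    ring
  rw [h2] at h1
  exact h1

lemma term_le_bdd (s : ℝ) (hs : 0 < s) (r p N : ℕ) (hr : 1 ≤ r)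
    (hp1 : r + 1 ≤ p) (hp2 : p ≤ 2 * r)
    (hQN : 2 * (r : ℝ) + 1 - (p : ℝ) ≤ (N : ℝ))
    (hdr : (r : ℝ) ≤ 2 * (p : ℝ) - 2 * (r : ℝ) - 1) :
    ((p : ℝ) * (2 * (r : ℝ) + 1 - (p : ℝ)) / (2 * (p : ℝ) - 2 * (r : ℝ) - 1)) *
      (Fz s (p : ℝ) - Fz s (2 * (r : ℝ) + 1 - (p : ℝ))) ≤ 6 * (N : ℝ) := by
  have hP : (r : ℝ) + 1 ≤ (p : ℝ) := by exact_mod_cast hp1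
  have hP2 : (p : ℝ) ≤ 2 * (r : ℝ) := by exact_mod_cast hp2
  have hr1 : (1 : ℝ) ≤ (r : ℝ) := by exact_mod_cast hr
  set P : ℝ := (p : ℝ)
  set Q : ℝ := 2 * (r : ℝ) + 1 - P with hQdef
  have hQ1 : (1 : ℝ) ≤ Q := by simp only [hQdef]; linarith
  have hP1 : (1 : ℝ) ≤ P := by linarith
  have hdr0 : (0 : ℝ) < 2 * P - 2 * (r : ℝ) - 1 := by linarith
  have hdiff : Fz s P - Fz s Q ≤ 2 := by
    linarith [Fz_le_one s hs hP1, Fz_ge s hs hQ1]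
  have hw0 : 0 ≤ P * Q / (2 * P - 2 * (r : ℝ) - 1) := by positivity
  have hw : P * Q / (2 * P - 2 * (r : ℝ) - 1) ≤ 3 * (N : ℝ) := by
    rw [div_le_iff₀ hdr0]
    have hN0 : (0 : ℝ) ≤ (N : ℝ) := Nat.cast_nonneg _
    nlinarith
  calc P * Q / (2 * P - 2 * (r : ℝ) - 1) * (Fz s P - Fz s Q)
      ≤ P * Q / (2 * P - 2 * (r : ℝ) - 1) * 2 := mul_le_mul_of_nonneg_left hdiff hw0
    _ ≤ 3 * (N : ℝ) * 2 := by linarith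
    _ = 6 * (N : ℝ) := by ring

set_option maxHeartbeats 2000000 in
/-- For every real `s` with `0 < s < 2` there exists a positive integer `rs` such that
for every integer `r ≥ rs` the finite sum
`S_r(s) = ∑_{p=r+1}^{2r} [p(2r+1−p)/(2p−2r−1)] ·
  (p^{−s}(−1+s ln p) − (2r+1−p)^{−s}(−1+s ln(2r+1−p)))`
is strictly negative. -/
theorem stmt0 (s : ℝ) (hs0 : 0 < s) (hs2 : s < 2) :
    ∃ rs : ℕ, 0 < rs ∧ ∀ r : ℕ, rs ≤ r →
      (∑ p ∈ Finset.Icc (r + 1) (2 * r),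
        ((p : ℝ) * (2 * (r : ℝ) + 1 - (p : ℝ)) / (2 * (p : ℝ) - 2 * (r : ℝ) - 1)) *
          ((p : ℝ) ^ (-s) * (-1 + s * Real.log (p : ℝ)) -
            (2 * (r : ℝ) + 1 - (p : ℝ)) ^ (-s) *
              (-1 + s * Real.log (2 * (r : ℝ) + 1 - (p : ℝ))))) < 0 := by
  set N : ℕ := ⌈Real.exp (3 / s)⌉₊ with hNdef
  have hN : Real.exp (3 / s) ≤ (N : ℝ) := Nat.le_ceil _
  have hN1 : 1 ≤ N := by
    rw [hNdef]
    exact Nat.one_le_iff_ne_zero.mpr (by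
      simp only [ne_eq, Nat.ceil_eq_zero, not_le]
      exact Real.exp_pos _)
  have htend : Tendsto (fun n : ℕ => (n : ℝ) ^ (2 - s)) atTop atTop :=
    (tendsto_rpow_atTop (by linarith)).comp tendsto_natCast_atTop_atTop
  obtain ⟨r0, hr0⟩ := eventually_atTop.mp
    (htend.eventually_gt_atTop (1296 * (N : ℝ) ^ 2 / s))
  refine ⟨max r0 (2 * N + 2), lt_of_lt_of_le (by omega) (le_max_right _ _), ?_⟩
  intro r hr
  have hrN : 2 * N + 2 ≤ r := le_trans (le_max_right _ _) hr
  have hrr0 : r0 ≤ r := le_trans (le_max_left _ _) hr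
  have hr2 : 2 ≤ r := by omega
  have hr1R : (1 : ℝ) ≤ (r : ℝ) := by exact_mod_cast (by omega : 1 ≤ r)
  have hrpos : (0 : ℝ) < (r : ℝ) := by linarith
  -- abbreviate the summand
  set T : ℕ → ℝ := fun p =>
    ((p : ℝ) * (2 * (r : ℝ) + 1 - (p : ℝ)) / (2 * (p : ℝ) - 2 * (r : ℝ) - 1)) *
      (Fz s (p : ℝ) - Fz s (2 * (r : ℝ) + 1 - (p : ℝ))) with hTdef
  have hshow : (∑ p ∈ Finset.Icc (r + 1) (2 * r),
        ((p : ℝ) * (2 * (r : ℝ) + 1 - (p : ℝ)) / (2 * (p : ℝ) - 2 * (r : ℝ) - 1)) *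
          ((p : ℝ) ^ (-s) * (-1 + s * Real.log (p : ℝ)) -
            (2 * (r : ℝ) + 1 - (p : ℝ)) ^ (-s) *
              (-1 + s * Real.log (2 * (r : ℝ) + 1 - (p : ℝ)))))
      = ∑ p ∈ Finset.Ico (r + 1) (2 * r + 1), T p := by
    rw [← Finset.Ico_add_one_right_eq_Icc]
    apply Finset.sum_congr rfl
    intro p _
    simp only [hTdef, Fz]
  rw [hshow]
  set m1 : ℕ := r + 1 + r / 2 with hm1
  set m2 : ℕ := 2 * r + 2 - N with hm2
  have h12 : r + 1 ≤ m1 := by omega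
  have h23 : m1 ≤ m2 := by omega
  have h34 : m2 ≤ 2 * r + 1 := by omega
  have h13 : r + 1 ≤ m2 := le_trans h12 h23
  rw [← Finset.sum_Ico_consecutive T h13 h34, ← Finset.sum_Ico_consecutive T h12 h23]
  set c : ℝ := s * (2 * (r : ℝ) + 1) ^ (-s - 1) with hcdef
  have hc : 0 < c := by
    apply mul_pos hs0
    apply Real.rpow_pos_of_pos
    linarith
  -- S1 bound
  have hS1 : ∑ p ∈ Finset.Ico (r + 1) m1, T p
      ≤ ((r / 2 : ℕ) : ℝ) * (-(c * ((r : ℝ) * ((r : ℝ) / 2)))) := by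
    have hcard : (Finset.Ico (r + 1) m1).card = r / 2 := by
      rw [Nat.card_Ico]; omega
    have hbd : ∀ p ∈ Finset.Ico (r + 1) m1, T p ≤ -(c * ((r : ℝ) * ((r : ℝ) / 2))) := by
      intro p hp
      rw [Finset.mem_Ico] at hp
      have hp2 : p + N ≤ 2 * r + 1 := by omega
      have h1 := term_le_neg s hs0 r p N hN hp.1 hp2
      have hPl : (r : ℝ) ≤ (p : ℝ) := by exact_mod_cast (by omega : r ≤ p)
      have hPu : (p : ℝ) ≤ (r : ℝ) + ((r / 2 : ℕ) : ℝ) := by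
        exact_mod_cast (by omega : p ≤ r + r / 2)
      have hhalf : ((r / 2 : ℕ) : ℝ) ≤ (r : ℝ) / 2 := by
        have : 2 * (r / 2) ≤ r := by omega
        have := (by exact_mod_cast this : 2 * ((r / 2 : ℕ) : ℝ) ≤ (r : ℝ))
        linarith
      have hQl : (r : ℝ) / 2 ≤ 2 * (r : ℝ) + 1 - (p : ℝ) := by linarith
      have hPQ : (r : ℝ) * ((r : ℝ) / 2) ≤ (p : ℝ) * (2 * (r : ℝ) + 1 - (p : ℝ)) := by
        apply mul_le_mul hPl hQl (by linarith) (by linarith)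
      calc T p ≤ -c * ((p : ℝ) * (2 * (r : ℝ) + 1 - (p : ℝ))) := h1
        _ ≤ -(c * ((r : ℝ) * ((r : ℝ) / 2))) := by nlinarith
    calc ∑ p ∈ Finset.Ico (r + 1) m1, T p
        ≤ (Finset.Ico (r + 1) m1).card • (-(c * ((r : ℝ) * ((r : ℝ) / 2)))) :=
          Finset.sum_le_card_nsmul _ _ _ hbd
      _ = ((r / 2 : ℕ) : ℝ) * (-(c * ((r : ℝ) * ((r : ℝ) / 2)))) := by
          rw [hcard, nsmul_eq_mul]
  -- S2 bound
  have hS2 : ∑ p ∈ Finset.Ico m1 m2, T p ≤ 0 := by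
    apply Finset.sum_nonpos
    intro p hp
    rw [Finset.mem_Ico] at hp
    have hp1 : r + 1 ≤ p := le_trans h12 hp.1
    have hp2 : p + N ≤ 2 * r + 1 := by omega
    have h1 := term_le_neg s hs0 r p N hN hp1 hp2
    have hP0 : (0 : ℝ) ≤ (p : ℝ) := Nat.cast_nonneg _
    have hQ0 : (0 : ℝ) ≤ 2 * (r : ℝ) + 1 - (p : ℝ) := by
      have : (p : ℝ) ≤ 2 * (r : ℝ) + 1 := by exact_mod_cast (by omega : p ≤ 2 * r + 1)
      linarith
    have h2 := mul_nonneg hc.le (mul_nonneg hP0 hQ0)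
    calc T p ≤ -c * ((p : ℝ) * (2 * (r : ℝ) + 1 - (p : ℝ))) := h1
      _ ≤ 0 := by rw [hcdef] at h2 ⊢; linarith
  -- S3 bound
  have hS3 : ∑ p ∈ Finset.Ico m2 (2 * r + 1), T p ≤ (N : ℝ) * (6 * (N : ℝ)) := by
    have hcard : (Finset.Ico m2 (2 * r + 1)).card = N - 1 := by
      rw [Nat.card_Ico]; omega
    have hbd : ∀ p ∈ Finset.Ico m2 (2 * r + 1), T p ≤ 6 * (N : ℝ) := by
      intro p hp
      rw [Finset.mem_Ico] at hp
      have hp1 : r + 1 ≤ p := by omega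
      have hp2 : p ≤ 2 * r := by omega
      have hQN : 2 * (r : ℝ) + 1 - (p : ℝ) ≤ (N : ℝ) := by
        have : 2 * r + 1 ≤ p + N := by omega
        have := (by exact_mod_cast this : 2 * (r : ℝ) + 1 ≤ (p : ℝ) + (N : ℝ))
        linarith
      have hdr : (r : ℝ) ≤ 2 * (p : ℝ) - 2 * (r : ℝ) - 1 := by
        have : 3 * r + 1 ≤ 2 * p := by omega
        have := (by exact_mod_cast this : 3 * (r : ℝ) + 1 ≤ 2 * (p : ℝ))
        linarith
      exact term_le_bdd s hs0 r p N (by omega) hp1 hp2 hQN hdr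
    calc ∑ p ∈ Finset.Ico m2 (2 * r + 1), T p
        ≤ (Finset.Ico m2 (2 * r + 1)).card • (6 * (N : ℝ)) :=
          Finset.sum_le_card_nsmul _ _ _ hbd
      _ = ((N - 1 : ℕ) : ℝ) * (6 * (N : ℝ)) := by rw [hcard, nsmul_eq_mul]
      _ ≤ (N : ℝ) * (6 * (N : ℝ)) := by
          have h1 : ((N - 1 : ℕ) : ℝ) ≤ (N : ℝ) := by exact_mod_cast (by omega : N - 1 ≤ N)
          have h2 : (0 : ℝ) ≤ 6 * (N : ℝ) := by positivity
          nlinarith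
  -- final numeric estimate
  set k : ℝ := ((r / 2 : ℕ) : ℝ) with hk
  have hkl : (r : ℝ) / 4 ≤ k := by
    have : r ≤ 2 * (r / 2) + 1 := by omega
    have h1 : (r : ℝ) ≤ 2 * k + 1 := by rw [hk]; exact_mod_cast this
    have : (2 : ℝ) ≤ (r : ℝ) := by exact_mod_cast hr2
    linarith
  have hk0 : (0 : ℝ) ≤ k := Nat.cast_nonneg _
  set u : ℝ := (r : ℝ) ^ (-s - 1) with hu
  have hu0 : (0 : ℝ) < u := Real.rpow_pos_of_pos hrpos _
  have hcl : s * (1 / 27) * u ≤ c := by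
    have hb1 : ((3 : ℝ) * (r : ℝ)) ^ (-s - 1) ≤ (2 * (r : ℝ) + 1) ^ (-s - 1) :=
      Real.rpow_le_rpow_of_nonpos (by linarith) (by linarith) (by linarith)
    have hb2 : ((3 : ℝ) * (r : ℝ)) ^ (-s - 1) = (3 : ℝ) ^ (-s - 1) * u :=
      Real.mul_rpow (by norm_num) hrpos.le
    have hb3 : (1 : ℝ) / 27 ≤ (3 : ℝ) ^ (-s - 1) := by
      have h1 : (3 : ℝ) ^ (-3 : ℝ) ≤ (3 : ℝ) ^ (-s - 1) :=
        Real.rpow_le_rpow_of_exponent_le (by norm_num) (by linarith)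
      refine le_trans (le_of_eq ?_) h1
      rw [show (-3 : ℝ) = ((-3 : ℤ) : ℝ) by norm_num, Real.rpow_intCast]
      norm_num
    have := mul_le_mul_of_nonneg_right hb3 hu0.le
    rw [hb2] at hb1
    calc s * (1 / 27) * u = s * ((1 / 27) * u) := by ring
      _ ≤ s * ((3 : ℝ) ^ (-s - 1) * u) := mul_le_mul_of_nonneg_left (by linarith) hs0.le
      _ ≤ s * ((2 * (r : ℝ) + 1) ^ (-s - 1)) := mul_le_mul_of_nonneg_left hb1 hs0.le
  have hur : u * (r : ℝ) ^ (3 : ℕ) = (r : ℝ) ^ (2 - s) := by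
    rw [hu, ← Real.rpow_natCast (r : ℝ) 3, ← Real.rpow_add hrpos]
    congr 1
    push_cast
    ring
  -- chain: k * (c * (r * (r/2))) ≥ s * r^(2-s) / 216
  have e1 : s * (1 / 27) * u * ((r : ℝ) * ((r : ℝ) / 2)) ≤ c * ((r : ℝ) * ((r : ℝ) / 2)) :=
    mul_le_mul_of_nonneg_right hcl (by positivity)
  have e2 : (r : ℝ) / 4 * (s * (1 / 27) * u * ((r : ℝ) * ((r : ℝ) / 2)))
      ≤ k * (c * ((r : ℝ) * ((r : ℝ) / 2))) :=
    mul_le_mul hkl e1 (by positivity) hk0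
  have e3 : (r : ℝ) / 4 * (s * (1 / 27) * u * ((r : ℝ) * ((r : ℝ) / 2)))
      = s * (u * (r : ℝ) ^ (3 : ℕ)) / 216 := by ring
  rw [e3, hur] at e2
  have hbig : 1296 * (N : ℝ) ^ 2 / s < (r : ℝ) ^ (2 - s) := hr0 r hrr0
  have hbig2 : 1296 * (N : ℝ) ^ 2 < (r : ℝ) ^ (2 - s) * s := (div_lt_iff₀ hs0).mp hbig
  have hfin : (N : ℝ) * (6 * (N : ℝ)) < k * (c * ((r : ℝ) * ((r : ℝ) / 2))) := by
    have h6 : (N : ℝ) * (6 * (N : ℝ)) < s * (r : ℝ) ^ (2 - s) / 216 := by nlinarith [hbig2]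
    linarith [e2]
  linarith [hS1, hS2, hS3, hfin]
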